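/- Let C be a category and F : Tw(C) ⥤ Type a functor on its twisted arrow category. Then the map sending a section (x_f)_{f ∈ Tw(C)} of F to the family (x_{𝟙_c})_{c ∈ C} of its values on identity arrows is injective, and its image consists exactly of those families (y_c ∈ F(𝟙_c))_{c} such that for every morphism f : c ⟶ c' in C, the images of y_c and y_{c'} in F(f) under the structure maps F(𝟙_c ⟶ f) and F(𝟙_{c'} ⟶ f) coincide. -/

import Mathlib

open CategoryTheory

universe w v₁ u₁

/-- The twisted arrow category of `C`: objects are morphisms of `C`. -/
structure Tw (C : Type u₁) [Category.{v₁} C] where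
  {left : C}
  {right : C}
  hom : left ⟶ right

namespace Tw

variable {C : Type u₁} [Category.{v₁} C]

/-- A morphism from `f : c ⟶ c'` to `g : d ⟶ d'` in the twisted arrow
category is a pair `(u : d ⟶ c, v : c' ⟶ d')` with `u ≫ f ≫ v = g`. -/
@[ext]
structure Hom (f g : Tw C) : Type v₁ where
  u : g.left ⟶ f.left
  v : f.right ⟶ g.right
  w : u ≫ f.hom ≫ v = g.hom

instance : Category (Tw C) where
  Hom := Hom
  id f := ⟨𝟙 _, 𝟙 _, by simp⟩
  comp {f g h} α β := ⟨β.u ≫ α.u, α.v ≫ β.v, by rw [← β.w, ← α.w]; simp⟩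
  id_comp α := by apply Hom.ext <;> simp
  comp_id α := by apply Hom.ext <;> simp
  assoc α β γ := by apply Hom.ext <;> simp

/-- The object of `Tw C` given by the identity arrow `𝟙 c`. -/
def idObj (c : C) : Tw C := ⟨𝟙 c⟩

/-- The canonical morphism `𝟙_c ⟶ f` in `Tw C`, given by the pair `(𝟙_c, f)`. -/
def ιleft (f : Tw C) : idObj f.left ⟶ f := ⟨𝟙 f.left, f.hom, by simp [idObj]⟩

/-- The canonical morphism `𝟙_{c'} ⟶ f` in `Tw C`, given by the pair `(f, 𝟙_{c'})`. -/
def ιright (f : Tw C) : idObj f.right ⟶ f := ⟨f.hom, 𝟙 f.right, by simp [idObj]⟩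

end Tw

/-- For `F : Tw(C) ⥤ Type`, the map sending a section `(x_f)` of `F` to the
family `(x_{𝟙_c})_{c}` of its values on identity arrows is injective, and its
image consists exactly of those families `(y_c)` such that for every arrow
`f : c ⟶ c'`, the images of `y_c` and `y_{c'}` in `F(f)` under the structure
maps `F(𝟙_c ⟶ f)` and `F(𝟙_{c'} ⟶ f)` coincide. -/
lemma Tw.comp_u {C : Type u₁} [Category.{v₁} C] {f g h : Tw C} (α : f ⟶ g) (β : g ⟶ h) :
    (α ≫ β).u = β.u ≫ α.u := rfl

lemma Tw.comp_v {C : Type u₁} [Category.{v₁} C] {f g h : Tw C} (α : f ⟶ g) (β : g ⟶ h) :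
    (α ≫ β).v = α.v ≫ β.v := rfl

lemma Tw.id_u {C : Type u₁} [Category.{v₁} C] (f : Tw C) : Tw.Hom.u (𝟙 f) = 𝟙 f.left := rfl

lemma Tw.id_v {C : Type u₁} [Category.{v₁} C] (f : Tw C) : Tw.Hom.v (𝟙 f) = 𝟙 f.right := rfl

theorem sections_of_twisted_arrows {C : Type u₁} [Category.{v₁} C]
    (F : Tw C ⥤ Type w) :
    Function.Injective (fun (x : F.sections) (c : C) => x.1 (Tw.idObj c)) ∧
    ∀ y : (c : C) → F.obj (Tw.idObj c),
      (∃ x : F.sections, ∀ c : C, x.1 (Tw.idObj c) = y c) ↔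
      ∀ f : Tw C, F.map (Tw.ιleft f) (y f.left) = F.map (Tw.ιright f) (y f.right) := by
  have idleft : ∀ c : C, Tw.ιleft (Tw.idObj c) = 𝟙 (Tw.idObj c) := by
    intro c; apply Tw.Hom.ext <;> simp [Tw.ιleft, Tw.idObj, Tw.id_u, Tw.id_v]
  have key : ∀ (x : F.sections) (f : Tw C),
      x.1 f = F.map (Tw.ιleft f) (x.1 (Tw.idObj f.left)) := by
    intro x f; exact (x.2 (Tw.ιleft f)).symm
  constructor
  · intro x x' h
    apply Subtype.ext; funext f
    rw [key x f, key x' f]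
    exact congrArg _ (congrFun h f.left)
  · intro y
    constructor
    · rintro ⟨x, hx⟩ f
      rw [← hx, ← hx]
      exact (x.2 (Tw.ιleft f)).trans (x.2 (Tw.ιright f)).symm
    · intro hy
      refine ⟨⟨fun f => F.map (Tw.ιleft f) (y f.left), ?_⟩, ?_⟩
      · intro f g α
        let t : Tw C := ⟨α.u⟩
        let δ : t ⟶ g := ⟨𝟙 g.left, f.hom ≫ α.v, by simpa using α.w⟩
        have h1 : Tw.ιleft t ≫ δ = Tw.ιleft g := by
          apply Tw.Hom.ext
          · simp [Tw.comp_u, Tw.ιleft, t, δ]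
            exact Category.comp_id _
          · simp only [Tw.comp_v, Tw.ιleft]
            rw [← α.w]
            exact rfl
        have h2 : Tw.ιright t ≫ δ = Tw.ιleft f ≫ α := by
          apply Tw.Hom.ext
          · simp [Tw.comp_u, Tw.ιleft, Tw.ιright, t, δ]
            exact (Category.id_comp _).trans (Category.comp_id _).symm
          · simp only [Tw.comp_v, Tw.ιleft, Tw.ιright]
            exact Category.id_comp _
        calc F.map α (F.map (Tw.ιleft f) (y f.left))
            = F.map (Tw.ιleft f ≫ α) (y f.left) := by
              rw [FunctorToTypes.map_comp_apply]
          _ = F.map δ (F.map (Tw.ιright t) (y f.left)) := by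
              rw [← FunctorToTypes.map_comp_apply, h2]
          _ = F.map δ (F.map (Tw.ιleft t) (y g.left)) := by rw [hy t]
          _ = F.map (Tw.ιleft g) (y g.left) := by
              rw [← FunctorToTypes.map_comp_apply, h1]
      · intro c
        simp only [idleft c]
        exact FunctorToTypes.map_id_apply F (y c)
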